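/- Let G be a finite simple directed graph without self-loops on vertex set [n] and let e be an edge of G. Then e belongs to a unicycle of G if and only if the maximum-acyclic-induced-subgraph region of G_e is a proper subset of that of G: ℛ_MAIS(G_e) ⊊ ℛ_MAIS(G). -/

import Mathlib

namespace IC

/-- The graph obtained by removing the edge `(a, b)`. -/
def removeEdge {V : Type*} (E : V → V → Prop) (a b : V) : V → V → Prop :=
  fun x y => E x y ∧ ¬(x = a ∧ y = b)

/-- The subgraph induced on `S` contains a directed cycle. -/
def HasCycleIn {V : Type*} (E : V → V → Prop) (S : Set V) : Prop :=
  ∃ (m : ℕ) (v : Fin (m + 2) → V), Function.Injective v ∧ (∀ i, v i ∈ S) ∧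
    ∀ i, E (v i) (v (i + 1))

/-- The MAIS outer bound region `ℛ_MAIS(G)`. -/
def maisRegion {n : ℕ} (E : Fin n → Fin n → Prop) : Set (Fin n → ℝ) :=
  {R | (∀ j, 0 ≤ R j) ∧
    ∀ S : Finset (Fin n), ¬ HasCycleIn E ↑S → ∑ j ∈ S, R j ≤ 1}

/-- The subgraph induced on `S` is a unicycle: `|S| ≥ 2` and `S` admits an
enumeration `v_0, …, v_{m−1}` such that the edges of the induced subgraph are
exactly the directed Hamiltonian cycle `v_0 → v_1 → ⋯ → v_{m−1} → v_0`. -/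
def IsUnicycle {V : Type*} (E : V → V → Prop) (S : Set V) : Prop :=
  ∃ (m : ℕ) (v : Fin (m + 2) → V), Function.Injective v ∧ Set.range v = S ∧
    ∀ a b, a ∈ S → b ∈ S → (E a b ↔ ∃ i, v i = a ∧ v (i + 1) = b)

/-- The edge `(x, y)` belongs to a unicycle of the graph. -/
def InUnicycle {V : Type*} (E : V → V → Prop) (x y : V) : Prop :=
  E x y ∧ ∃ S : Set V, IsUnicycle E S ∧ x ∈ S ∧ y ∈ S

end IC

open IC
open Fin.NatCast Fin.CommRing

/-- On a unicycle, removing the unique cycle edge `(a,b)` leaves no cycle. -/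
private lemma unicycle_no_cycle {n : ℕ} {E : Fin n → Fin n → Prop} {m : ℕ}
    {v : Fin (m + 2) → Fin n} (hv : Function.Injective v)
    (hiff : ∀ x y, x ∈ Set.range v → y ∈ Set.range v →
      (E x y ↔ ∃ i, v i = x ∧ v (i + 1) = y))
    {a b : Fin n} (i0 : Fin (m + 2)) (hi0a : v i0 = a) (hi0b : v (i0 + 1) = b) :
    ¬ HasCycleIn (removeEdge E a b) (Set.range v) := by
  rintro ⟨k, w, hw, hwS, hwE⟩
  simp only [Set.mem_range] at hwS
  choose f hf using hwS
  have hstep : ∀ i, f (i + 1) = f i + 1 := by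
    intro i
    obtain ⟨j, hj1, hj2⟩ := (hiff _ _ ⟨f i, hf i⟩ ⟨f (i+1), hf (i+1)⟩).1 (hwE i).1
    have hji : j = f i := hv (hj1.trans (hf i).symm)
    subst hji
    exact hv ((hf (i+1)).trans hj2.symm)
  have hval : ∀ i : Fin (k + 2), f i = f 0 + ((i.val : ℕ) : Fin (m + 2)) := by
    intro i
    induction i using Fin.induction with
    | zero => simp
    | succ i ih =>
      have hlt : i.castSucc < Fin.last (k+1) := by
        rw [Fin.lt_iff_val_lt_val, Fin.coe_castSucc, Fin.val_last]
        exact i.isLt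
      have h1 : i.succ = i.castSucc + 1 :=
        Fin.ext (by rw [Fin.val_succ, Fin.val_add_one_of_lt hlt, Fin.coe_castSucc])
      rw [h1, hstep, ih, Fin.coe_castSucc, Fin.val_add_one_of_lt hlt,
        Fin.coe_castSucc, add_assoc]
      congr 1
      push_cast
      ring
  have finj : Function.Injective f := by
    intro i i' h
    exact hw ((hf i).symm.trans (h ▸ hf i'))
  have h1 := hstep (Fin.last (k+1))
  rw [Fin.last_add_one, hval (Fin.last (k+1)), Fin.val_last] at h1
  have h2 : ((k + 2 : ℕ) : Fin (m + 2)) = 0 := by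
    push_cast at h1 ⊢
    linear_combination -h1
  have hdvd : (m + 2) ∣ (k + 2) := by
    have h3 := congrArg Fin.val h2
    rw [Fin.val_natCast] at h3
    exact Nat.dvd_of_mod_eq_zero (by simpa using h3)
  have hle : k + 2 ≤ m + 2 := by
    by_contra hgt
    push_neg at hgt
    have e1 : f ⟨m+2, by omega⟩ = f 0 := by
      rw [hval ⟨m+2, by omega⟩]
      simp
    have e2 := finj e1
    have e3 : m + 2 = 0 := by simpa using congrArg Fin.val e2
    omega
  have hkm : k = m := by
    have := Nat.le_of_dvd (by omega) hdvd
    omega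
  subst hkm
  obtain ⟨i, hi⟩ := (Finite.injective_iff_surjective.mp finj) i0
  apply (hwE i).2
  constructor
  · rw [← hf i, hi]; exact hi0a
  · rw [← hf (i+1), hstep i, hi]; exact hi0b

/-- If `(a,b)` lies on no unicycle, then any cycle within `S` can be replaced
by a cycle within `S` avoiding the edge `(a,b)`. -/
private lemma cycle_remove_aux {n : ℕ} {E : Fin n → Fin n → Prop} (hE : ∀ i, ¬ E i i)
    {a b : Fin n} (hni : ¬ InUnicycle E a b) (S : Set (Fin n)) :
    ∀ m : ℕ, ∀ v : Fin (m + 2) → Fin n, Function.Injective v → (∀ i, v i ∈ S) →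
      (∀ i, E (v i) (v (i + 1))) → HasCycleIn (removeEdge E a b) S := by
  intro m
  induction m using Nat.strong_induction_on with
  | _ m IH =>
  intro v hv hvS hvE
  by_cases hab' : ∃ i, v i = a ∧ v (i + 1) = b
  case neg =>
    exact ⟨m, v, hv, hvS, fun i => ⟨hvE i, fun h => hab' ⟨i, h⟩⟩⟩
  case pos =>
  by_cases hch : ∀ p q : Fin (m + 2), E (v p) (v q) → ∃ j, v j = v p ∧ v (j + 1) = v q
  · -- no chords: the range of `v` is a unicycle through `(a,b)`, contradiction
    exfalso
    obtain ⟨i, hia, hib⟩ := hab'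
    apply hni
    refine ⟨hia ▸ hib ▸ hvE i, Set.range v, ⟨m, v, hv, rfl, ?_⟩, ⟨i, hia⟩, ⟨i+1, hib⟩⟩
    rintro x y ⟨p, rfl⟩ ⟨q, rfl⟩
    exact ⟨hch p q, fun ⟨j, hj1, hj2⟩ => hj1 ▸ hj2 ▸ hvE j⟩
  · -- a chord exists: build a strictly shorter cycle and use induction
    push_neg at hch
    obtain ⟨p, q, hpq, hnc⟩ := hch
    have hpqne : p ≠ q := by
      intro h
      exact hE (v p) (by rw [h] at hpq ⊢; exact hpq)
    have hq1 : q ≠ p + 1 := by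
      intro h
      exact hnc p rfl (by rw [h])
    have hd0 : (p - q).val ≠ 0 := by
      intro h
      exact hpqne (sub_eq_zero.mp (Fin.ext h))
    have hz : ((m + 2 : ℕ) : Fin (m + 2)) = 0 := Fin.natCast_self _
    have hdm : (p - q).val ≠ m + 1 := by
      intro h
      apply hq1
      have hc : p - q = ((m + 1 : ℕ) : Fin (m + 2)) := by
        apply Fin.ext
        rw [h, Fin.val_natCast, Nat.mod_eq_of_lt (by omega)]
      push_cast at hc hz ⊢
      linear_combination - hc - hz
    obtain ⟨k, hkd⟩ : ∃ k, (p - q).val = k + 1 := ⟨(p - q).val - 1, by omega⟩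
    have hkm : k < m := by
      have := (p - q).isLt
      omega
    have key : q + ((k + 1 : ℕ) : Fin (m + 2)) = p := by
      rw [← hkd, Fin.cast_val_eq_self]
      exact add_sub_cancel q p
    set u : Fin (k + 2) → Fin n := fun j => v (q + ((j.val : ℕ) : Fin (m + 2))) with hu
    have hucast : ∀ j : Fin (k + 2), ((j.val : ℕ) : Fin (m + 2)).val = j.val := by
      intro j
      have := j.isLt
      rw [Fin.val_natCast]
      exact Nat.mod_eq_of_lt (by omega)
    have huinj : Function.Injective u := by
      intro j j' h
      have h2 := add_left_cancel (hv h)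
      apply Fin.ext
      have h3 := congrArg Fin.val h2
      rwa [hucast j, hucast j'] at h3
    have humem : ∀ j, u j ∈ S := fun j => hvS _
    have huE : ∀ j : Fin (k + 2), E (u j) (u (j + 1)) := by
      intro j
      rcases Nat.lt_or_ge j.val (k + 1) with hj | hj
      · have hlt : j < Fin.last (k + 1) := by
          rw [Fin.lt_iff_val_lt_val, Fin.val_last]
          exact hj
        have hj1 : (j + 1).val = j.val + 1 := Fin.val_add_one_of_lt hlt
        show E (v (q + ((j.val : ℕ) : Fin (m+2)))) (v (q + (((j+1).val : ℕ) : Fin (m+2))))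
        rw [hj1]
        have hcst : ((j.val + 1 : ℕ) : Fin (m + 2)) = ((j.val : ℕ) : Fin (m + 2)) + 1 := by
          push_cast
          ring
        rw [hcst, ← add_assoc]
        exact hvE _
      · have hj' : j.val = k + 1 := by
          have := j.isLt
          omega
        have hj0 : j + 1 = 0 := by
          have hjl : j = Fin.last (k + 1) := Fin.ext (by rw [Fin.val_last]; exact hj')
          rw [hjl, Fin.last_add_one]
        show E (v (q + ((j.val : ℕ) : Fin (m+2)))) (v (q + (((j+1).val : ℕ) : Fin (m+2))))
        rw [hj0, hj', key]
        simpa using hpq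
    exact IH k hkm u huinj humem huE

/-- An edge `(a, b)` of `G` belongs to a unicycle of `G` iff
the MAIS region of `G` with the edge removed is a proper subset of the MAIS
region of `G`. -/
theorem inUnicycle_iff_maisRegion_ssubset
    (n : ℕ) (E : Fin n → Fin n → Prop) (hE : ∀ i, ¬ E i i)
    (a b : Fin n) (hab : E a b) :
    IC.InUnicycle E a b ↔
      IC.maisRegion (IC.removeEdge E a b) ⊂ IC.maisRegion E := by
  rw [Set.ssubset_def]
  constructor
  · rintro ⟨hab', S, ⟨m, v, hv, rfl, hiff⟩, haS, hbS⟩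
    obtain ⟨i0, hi0a, hi0b⟩ := (hiff a b haS hbS).1 hab
    set S' : Finset (Fin n) := Finset.image v Finset.univ with hS'
    have hS'coe : (↑S' : Set (Fin n)) = Set.range v := by
      simp [hS']
    have hS'card : S'.card = m + 2 := by
      rw [hS', Finset.card_image_of_injective _ hv, Finset.card_univ, Fintype.card_fin]
    have hmemS' : ∀ i, v i ∈ S' := fun i => by simp [hS']
    set c : ℝ := 1 / (m + 1) with hc
    have hm1 : (0 : ℝ) < (m : ℝ) + 1 := by positivity
    have hcpos : 0 < c := by rw [hc]; positivity
    set R : Fin n → ℝ := fun j => if j ∈ S' then c else 0 with hR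
    constructor
    · rintro R' ⟨h0, hcons⟩
      refine ⟨h0, fun T hT => hcons T ?_⟩
      rintro ⟨k, w, hw, hwS, hwE⟩
      exact hT ⟨k, w, hw, hwS, fun i => (hwE i).1⟩
    · intro hsub
      have hRmem : R ∈ maisRegion E := by
        constructor
        · intro j
          rw [hR]
          dsimp only
          split
          · exact hcpos.le
          · exact le_rfl
        · intro T hT
          have hsum : ∑ j ∈ T, R j = (T ∩ S').card • c := by
            rw [hR]
            dsimp only
            rw [Finset.sum_ite_mem, Finset.sum_const]
          have hcardle : (T ∩ S').card ≤ m + 1 := by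
            by_contra hgt
            push_neg at hgt
            have h1 : T ∩ S' = S' :=
              Finset.eq_of_subset_of_card_le Finset.inter_subset_right (by omega)
            have hsubS : S' ⊆ T := by
              rw [← h1]
              exact Finset.inter_subset_left
            apply hT
            exact ⟨m, v, hv, fun i => Finset.mem_coe.mpr (hsubS (hmemS' i)),
              fun i => (hiff _ _ ⟨i, rfl⟩ ⟨i+1, rfl⟩).2 ⟨i, rfl, rfl⟩⟩
          rw [hsum, nsmul_eq_mul]
          calc ((T ∩ S').card : ℝ) * c ≤ ((m : ℝ) + 1) * c := by
                apply mul_le_mul_of_nonneg_right _ hcpos.le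
                exact_mod_cast hcardle
            _ = 1 := by rw [hc]; field_simp
      have hRnot : R ∉ maisRegion (removeEdge E a b) := by
        rintro ⟨_, hcons⟩
        have hnc : ¬ HasCycleIn (removeEdge E a b) ↑S' := by
          rw [hS'coe]
          exact unicycle_no_cycle hv hiff i0 hi0a hi0b
        have hle := hcons S' hnc
        have hsum : ∑ j ∈ S', R j = ((m : ℝ) + 2) * c := by
          rw [hR]
          dsimp only
          rw [Finset.sum_congr rfl (fun j hj => if_pos hj), Finset.sum_const,
            nsmul_eq_mul, hS'card]
          push_cast
          ring
        rw [hsum, hc] at hle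
        rw [mul_one_div, div_le_one hm1] at hle
        linarith
      exact hRnot (hsub hRmem)
  · intro h
    by_contra hni
    apply h.2
    rintro R ⟨h0, hcons⟩
    refine ⟨h0, fun T hT => hcons T ?_⟩
    rintro ⟨m, v, hv, hvS, hvE⟩
    exact hT (cycle_remove_aux hE hni ↑T m v hv hvS hvE)
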